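/- arXiv:1309.7506 — 3 statements merged into one kernel-verified Lean document; each statement's English description precedes it below -/
import Mathlib

section
/- For every finite partition of the positive integers into l classes, there exist an index i and positive integers x, y, z in class C_i such that x + y = z, x divides y, and x divides z. -/
open Set

private lemma pigeon_inf {l : ℕ} {S : Set ℕ} (hS : S.Infinite) (g : ℕ → Fin l) :
    ∃ i, {x ∈ S | g x = i}.Infinite := by
  by_contra h
  push_neg at h
  have hsub : S ⊆ ⋃ i : Fin l, {x ∈ S | g x = i} :=
    fun x hx => Set.mem_iUnion.2 ⟨g x, hx, rfl⟩
  exact hS ((Set.finite_iUnion h).subset hsub)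

private lemma ramsey_triangle {l : ℕ} (f : ℕ → ℕ → Fin l) :
    ∃ i j k, i < j ∧ j < k ∧ f i j = f j k ∧ f i j = f i k := by
  have key : ∀ S : {S : Set ℕ // S.Infinite},
      ∃ (v : ℕ) (i : Fin l), v ∈ S.1 ∧ ({x ∈ S.1 | v < x ∧ f v x = i}).Infinite := by
    rintro ⟨S, hS⟩
    obtain ⟨v, hv⟩ := hS.nonempty
    have hT : ({x ∈ S | v < x}).Infinite := by
      have : S \ Set.Iic v ⊆ {x ∈ S | v < x} := by
        intro x hx
        exact ⟨hx.1, by simpa using hx.2⟩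
      exact (hS.diff (Set.finite_Iic v)).mono this
    obtain ⟨i, hi⟩ := pigeon_inf hT (f v)
    refine ⟨v, i, hv, hi.mono ?_⟩
    rintro x ⟨⟨hxS, hvx⟩, hfx⟩
    exact ⟨hxS, hvx, hfx⟩
  choose vf cf hmem hinf using key
  let chain : ℕ → {S : Set ℕ // S.Infinite} := fun n =>
    Nat.rec ⟨Set.univ, Set.infinite_univ⟩
      (fun _ S => ⟨{x ∈ S.1 | vf S < x ∧ f (vf S) x = cf S}, hinf S⟩) n
  set v : ℕ → ℕ := fun n => vf (chain n) with hv
  set col : ℕ → Fin l := fun n => cf (chain n) with hcol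
  have hchain : ∀ n, (chain (n+1)).1 = {x ∈ (chain n).1 | v n < x ∧ f (v n) x = col n} :=
    fun n => rfl
  have hsub : ∀ n m, n ≤ m → (chain m).1 ⊆ (chain n).1 := by
    intro n m hnm
    induction hnm with
    | refl => exact subset_rfl
    | @step m' h ih =>
      refine subset_trans ?_ ih
      rw [hchain m']
      exact fun x hx => hx.1
  have hlt : ∀ n m, n < m → v n < v m ∧ f (v n) (v m) = col n := by
    intro n m hnm
    have h1 : v m ∈ (chain m).1 := hmem _
    have h2 : v m ∈ (chain (n+1)).1 := hsub _ _ hnm h1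
    rw [hchain n] at h2
    exact ⟨h2.2.1, h2.2.2⟩
  obtain ⟨p, q, hne, heq⟩ := Finite.exists_ne_map_eq_of_infinite col
  rcases (Ne.lt_or_gt hne) with hpq | hpq
  · refine ⟨v p, v q, v (q+1), (hlt p q hpq).1, (hlt q (q+1) (by omega)).1, ?_, ?_⟩
    · rw [(hlt p q hpq).2, (hlt q (q+1) (by omega)).2, heq]
    · rw [(hlt p q hpq).2, (hlt p (q+1) (by omega)).2]
  · refine ⟨v q, v p, v (p+1), (hlt q p hpq).1, (hlt p (p+1) (by omega)).1, ?_, ?_⟩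
    · rw [(hlt q p hpq).2, (hlt p (p+1) (by omega)).2, heq]
    · rw [(hlt q p hpq).2, (hlt q (p+1) (by omega)).2]

private def aseq : ℕ → ℕ := fun n => Nat.rec 1 (fun _ x => x + x.factorial) n

private lemma aseq_pos : ∀ n, 0 < aseq n := by
  intro n
  induction n with
  | zero => exact Nat.one_pos
  | succ n ih => exact Nat.lt_of_lt_of_le ih (Nat.le_add_right _ _)

private lemma aseq_mono : StrictMono aseq := by
  apply strictMono_nat_of_lt_succ
  intro n
  have : 0 < (aseq n).factorial := Nat.factorial_pos _
  show aseq n < aseq n + (aseq n).factorial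
  omega

private lemma aseq_dvd {d j : ℕ} (hd : 0 < d) (hdj : d ≤ aseq j) :
    ∀ k, j ≤ k → d ∣ (aseq k - aseq j) := by
  intro k hk
  induction hk with
  | refl => simp
  | @step k' h' ih =>
    have hmono : aseq j ≤ aseq k' := aseq_mono.le_iff_le.2 h'
    have hstep : aseq (k' + 1) = aseq k' + (aseq k').factorial := rfl
    have heq : aseq (k' + 1) - aseq j = (aseq k' - aseq j) + (aseq k').factorial := by
      omega
    rw [heq]
    exact dvd_add ih (Nat.dvd_factorial hd (le_trans hdj hmono))

theorem stmt_4 (l : ℕ) (c : ℕ → Fin l) :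
    ∃ x y z : ℕ, 0 < x ∧ 0 < y ∧ 0 < z ∧ x + y = z ∧ x ∣ y ∧ x ∣ z ∧
      c x = c y ∧ c y = c z := by
  obtain ⟨i, j, k, hij, hjk, h1, h2⟩ := ramsey_triangle (fun i j => c (aseq j - aseq i))
  have hij' : aseq i < aseq j := aseq_mono hij
  have hjk' : aseq j < aseq k := aseq_mono hjk
  refine ⟨aseq j - aseq i, aseq k - aseq j, aseq k - aseq i, by omega, by omega, by omega,
    by omega, ?_, ?_, h1, ?_⟩
  · exact aseq_dvd (by omega) (by omega) k (le_of_lt hjk)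
  · have hy : (aseq j - aseq i) ∣ (aseq k - aseq j) :=
      aseq_dvd (by omega) (by omega) k (le_of_lt hjk)
    have : aseq k - aseq i = (aseq j - aseq i) + (aseq k - aseq j) := by omega
    rw [this]
    exact dvd_add dvd_rfl hy
  · rw [← h1, h2]
end

section
/- For every positive integer k there is a constant c₀(k) such that: for every completely multiplicative function f : ℤ⁺ → ℂ whose values are all k-th roots of unity, there exists a positive integer a ≤ c₀(k) with f(a) = f(a+1) = 1. -/
open Finset

/-- Ramsey numbers for monochromatic triangles with `k` colors. -/
def Nk : ℕ → ℕ
  | 0 => 2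
  | (k+1) => (k+1) * Nk k + 2

lemma two_le_Nk (k : ℕ) : 2 ≤ Nk k := by
  cases k with
  | zero => simp [Nk]
  | succ k => show 2 ≤ (k+1) * Nk k + 2; omega

/-- Triangle Ramsey theorem for `k` colors. -/
lemma ramseyTriangle {α : Type} [DecidableEq α] (c : ℕ → ℕ → α) :
    ∀ (k : ℕ) (s : Finset α), s.card ≤ k → ∀ V : Finset ℕ, Nk k ≤ V.card →
    (∀ i ∈ V, ∀ j ∈ V, i < j → c i j ∈ s) →
    ∃ i ∈ V, ∃ j ∈ V, ∃ l ∈ V, i < j ∧ j < l ∧ c i j = c j l ∧ c i j = c i l := by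
  intro k
  induction k with
  | zero =>
    intro s hs V hV hcol
    have hs0 : s = ∅ := card_eq_zero.mp (Nat.le_zero.mp hs)
    have h2 : 1 < V.card := by have := two_le_Nk 0; omega
    obtain ⟨i, hi, j, hj, hij⟩ := Finset.one_lt_card.mp h2
    rcases lt_or_gt_of_ne hij with h | h
    · exact absurd (hcol i hi j hj h) (by simp [hs0])
    · exact absurd (hcol j hj i hi h) (by simp [hs0])
  | succ k ih =>
    intro s hs V hV hcol
    have hVne : V.Nonempty := card_pos.mp (by have := two_le_Nk (k+1); omega)
    set x := V.min' hVne with hxdef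
    have hxV : x ∈ V := V.min'_mem hVne
    set V' := V.erase x with hV'def
    have hxlt : ∀ j ∈ V', x < j := by
      intro j hj
      exact lt_of_le_of_ne (V.min'_le j (mem_of_mem_erase hj)) (Ne.symm (ne_of_mem_erase hj))
    have hmap : ∀ j ∈ V', c x j ∈ s := fun j hj =>
      hcol x hxV j (mem_of_mem_erase hj) (hxlt j hj)
    have hV'card : (k+1) * Nk k + 1 ≤ V'.card := by
      rw [hV'def, card_erase_of_mem hxV]
      have : Nk (k+1) = (k+1) * Nk k + 2 := rfl
      omega
    have hsne : s.Nonempty := by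
      have : V'.Nonempty := card_pos.mp (by omega)
      obtain ⟨j, hj⟩ := this
      exact ⟨c x j, hmap j hj⟩
    obtain ⟨a, ha, hS⟩ := Finset.exists_le_card_fiber_of_mul_le_card_of_maps_to (n := Nk k) hmap hsne
      (by have := Nat.mul_le_mul_right (Nk k) hs; omega)
    set S := {y ∈ V' | c x y = a} with hSdef
    have hSsub : ∀ j ∈ S, j ∈ V := fun j hj =>
      mem_of_mem_erase (mem_of_mem_filter j hj)
    have hSc : ∀ j ∈ S, c x j = a := by
      intro j hj
      exact (mem_filter.mp hj).2
    by_cases h : ∃ j ∈ S, ∃ l ∈ S, j < l ∧ c j l = a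
    · obtain ⟨j, hj, l, hl, hjl, hcjl⟩ := h
      refine ⟨x, hxV, j, hSsub j hj, l, hSsub l hl,
        hxlt j (mem_of_mem_filter j hj), hjl, ?_, ?_⟩
      · rw [hSc j hj, hcjl]
      · rw [hSc j hj, hSc l hl]
    · push_neg at h
      have hcol' : ∀ i ∈ S, ∀ j ∈ S, i < j → c i j ∈ s.erase a := by
        intro i hi j hj hij
        exact mem_erase.mpr ⟨h i hi j hj hij, hcol i (hSsub i hi) j (hSsub j hj) hij⟩
      have hscard : (s.erase a).card ≤ k := by
        rw [card_erase_of_mem ha]; omega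
      obtain ⟨i, hi, j, hj, l, hl, h1, h2, h3, h4⟩ := ih (s.erase a) hscard S hS hcol'
      exact ⟨i, hSsub i hi, j, hSsub j hj, l, hSsub l hl, h1, h2, h3, h4⟩

/-- A sequence whose differences form a divisibility-compatible system. -/
def vseq : ℕ → ℕ
  | 0 => 1
  | (n+1) => vseq n + (vseq n).factorial

lemma vseq_pos (n : ℕ) : 0 < vseq n := by
  induction n with
  | zero => simp [vseq]
  | succ n ih => simp [vseq]; omega

lemma vseq_strictMono : StrictMono vseq := by
  apply strictMono_nat_of_lt_succ
  intro n
  have := Nat.factorial_pos (vseq n)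
  simp [vseq]; omega

lemma vseq_dvd {i j : ℕ} (hij : i < j) :
    ∀ l, j ≤ l → (vseq j - vseq i) ∣ (vseq l - vseq j) := by
  have hd : 0 < vseq j - vseq i := by
    have := vseq_strictMono hij; omega
  have hdj : vseq j - vseq i ≤ vseq j := by omega
  intro l
  induction l with
  | zero => intro h; interval_cases j <;> simp_all
  | succ l ihl =>
    intro hjl
    rcases Nat.lt_or_ge l j with h | h
    · have : j = l + 1 := by omega
      subst this
      have : vseq (l+1) - vseq (l+1) = 0 := by omega
      simp [this]
    · have hjl' : vseq j ≤ vseq l := vseq_strictMono.monotone h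
      have heq : vseq (l+1) - vseq j = (vseq l - vseq j) + (vseq l).factorial := by
        simp [vseq]; omega
      rw [heq]
      refine Nat.dvd_add (ihl h) (Nat.dvd_factorial hd ?_)
      omega

theorem stmt_9 (k : ℕ) (hk : 0 < k) :
    ∃ c₀ : ℕ, ∀ f : ℕ → ℂ,
      (∀ m n : ℕ, 0 < m → 0 < n → f (m * n) = f m * f n) →
      (∀ n : ℕ, 0 < n → f n ^ k = 1) →
      ∃ a : ℕ, 0 < a ∧ a ≤ c₀ ∧ f a = 1 ∧ f (a + 1) = 1 := by
  classical
  refine ⟨vseq (Nk k), ?_⟩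
  intro f hmul hpow
  set s : Finset ℂ := (Polynomial.nthRoots k (1 : ℂ)).toFinset with hsdef
  have hscard : s.card ≤ k :=
    le_trans (Multiset.toFinset_card_le _) (Polynomial.card_nthRoots k 1)
  set c : ℕ → ℕ → ℂ := fun i j => f (vseq j - vseq i) with hcdef
  have hcol : ∀ i ∈ Finset.range (Nk k), ∀ j ∈ Finset.range (Nk k), i < j → c i j ∈ s := by
    intro i _ j _ hij
    rw [hsdef, Multiset.mem_toFinset, Polynomial.mem_nthRoots hk]
    have := vseq_strictMono hij
    exact hpow _ (by omega)
  obtain ⟨i, hi, j, hj, l, hl, hij, hjl, h1, h2⟩ :=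
    ramseyTriangle c k s hscard (Finset.range (Nk k)) (by simp) hcol
  -- set up the Schur triple
  set x := vseq j - vseq i with hxdef
  set y := vseq l - vseq j with hydef
  have hvij := vseq_strictMono hij
  have hvjl := vseq_strictMono hjl
  have hx : 0 < x := by omega
  have hy : 0 < y := by omega
  have hxy : x ∣ y := vseq_dvd hij l (le_of_lt hjl)
  obtain ⟨d, hdeq⟩ := hxy
  have hd : 0 < d := by
    rcases Nat.eq_zero_or_pos d with h | h
    · subst h; simp at hdeq; omega
    · exact h
  have hz : vseq l - vseq i = x * (d + 1) := by
    have : vseq l - vseq i = x + y := by omega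
    rw [this, hdeq]; ring
  -- colors
  have hfx : f x ≠ 0 := by
    intro h0
    have := hpow x hx
    rw [h0, zero_pow hk.ne'] at this
    exact zero_ne_one this
  have hfy : f x = f y := h1
  have hfz : f x = f (vseq l - vseq i) := h2
  have hfd : f d = 1 := by
    have : f y = f x * f d := by rw [hdeq]; exact hmul x d hx hd
    rw [← hfy] at this
    have := this.symm
    nth_rewrite 2 [← mul_one (f x)] at this
    exact mul_left_cancel₀ hfx this
  have hfd1 : f (d + 1) = 1 := by
    have : f (vseq l - vseq i) = f x * f (d + 1) := by
      rw [hz]; exact hmul x (d+1) hx (by omega)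
    rw [← hfz] at this
    have := this.symm
    nth_rewrite 2 [← mul_one (f x)] at this
    exact mul_left_cancel₀ hfx this
  refine ⟨d, hd, ?_, hfd, hfd1⟩
  have hdy : d ≤ y := by
    calc d ≤ x * d := Nat.le_mul_of_pos_left d hx
    _ = y := hdeq.symm
  have hlN : l < Nk k := Finset.mem_range.mp hl
  have : vseq l ≤ vseq (Nk k) := vseq_strictMono.monotone (le_of_lt hlN)
  omega
end

section
/- For every coloring c : ℤ⁺ → Fin l, there exist positive integers a and b with a ∣ b such that c(a) = c(b) = c(a + b). -/
/-- Infinite Ramsey for triangles: any `l`-coloring of pairs of naturals contains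
a monochromatic triangle. -/
lemma exists_mono_triangle : ∀ (l : ℕ) (f : ℕ → ℕ → Fin l),
    ∃ i j k : ℕ, i < j ∧ j < k ∧ f i j = f j k ∧ f i k = f j k := by
  intro l
  induction l with
  | zero => intro f; exact (f 0 1).elim0
  | succ l ih =>
    intro f
    obtain ⟨i₀, hinf⟩ := Finite.exists_infinite_fiber (fun n => f 0 n)
    have hs : ((fun n => f 0 n) ⁻¹' {i₀}).Infinite := Set.infinite_coe_iff.mp hinf
    have hs' : (((fun n => f 0 n) ⁻¹' {i₀}) \ {0}).Infinite :=
      hs.diff (Set.finite_singleton 0)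
    haveI : Infinite ↥(((fun n => f 0 n) ⁻¹' {i₀}) \ {0}) := hs'.to_subtype
    set g := Nat.Subtype.orderIsoOfNat (((fun n => f 0 n) ⁻¹' {i₀}) \ {0}) with hg
    set G : ℕ → ℕ := fun m => (g m : ℕ) with hG
    have hGmono : StrictMono G := fun m n h => by
      exact_mod_cast g.strictMono h
    have hGmem : ∀ m, f 0 (G m) = i₀ ∧ G m ≠ 0 := fun m => (g m).2
    by_cases h : ∃ m n : ℕ, m < n ∧ f (G m) (G n) = i₀
    · obtain ⟨m, n, hmn, hcol⟩ := h
      refine ⟨0, G m, G n, ?_, hGmono hmn, ?_, ?_⟩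
      · exact Nat.pos_of_ne_zero (hGmem m).2
      · rw [(hGmem m).1, hcol]
      · rw [(hGmem n).1, hcol]
    · push_neg at h
      have hne : ∀ m n : ℕ, m < n → f (G m) (G n) ≠ i₀ := h
      set e := finSuccEquiv' i₀ with he
      have hsome : ∀ m n : ℕ, m < n → (e (f (G m) (G n))).isSome := by
        intro m n hmn
        rcases ho : e (f (G m) (G n)) with _ | y
        · exfalso
          apply hne m n hmn
          have := congrArg e.symm ho
          rwa [Equiv.symm_apply_apply, finSuccEquiv'_symm_none] at this
        · rfl
      have hd : (e (f (G 0) (G 1))).isSome := hsome 0 1 Nat.zero_lt_one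
      let d : Fin l := (e (f (G 0) (G 1))).get hd
      obtain ⟨i, j, k, hij, hjk, h1, h2⟩ :=
        ih (fun m n => (e (f (G m) (G n))).getD d)
      have key : ∀ m n : ℕ, m < n → e (f (G m) (G n)) = some ((e (f (G m) (G n))).getD d) := by
        intro m n hmn
        rcases ho : e (f (G m) (G n)) with _ | y
        · exact absurd (ho ▸ hsome m n hmn) (by simp)
        · simp [ho]
      have e1 : f (G i) (G j) = f (G j) (G k) := by
        apply e.injective
        rw [key i j hij, key j k hjk, h1]
      have e2 : f (G i) (G k) = f (G j) (G k) := by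
        apply e.injective
        rw [key i k (hij.trans hjk), key j k hjk, h2]
      exact ⟨G i, G j, G k, hGmono hij, hGmono hjk, e1, e2⟩

/-- A rapidly growing chain: each step adds the factorial of the current value. -/
def chain : ℕ → ℕ
  | 0 => 1
  | k + 1 => chain k + Nat.factorial (chain k)

lemma chain_pos (k : ℕ) : 0 < chain k := by
  induction k with
  | zero => simp [chain]
  | succ k ih =>
    have := Nat.factorial_pos (chain k)
    simp [chain]; omega

lemma chain_strictMono : StrictMono chain := by
  apply strictMono_nat_of_lt_succ
  intro k
  have := Nat.factorial_pos (chain k)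
  simp [chain]; omega

lemma chain_diff_dvd {i j : ℕ} (k : ℕ) (hij : i < j) (hjk : j ≤ k) :
    (chain j - chain i) ∣ (chain k - chain j) := by
  induction k with
  | zero => omega
  | succ k ih =>
    rcases Nat.lt_or_ge k j with hk | hk
    · have : j = k + 1 := by omega
      subst this; simp
    · have hmono := chain_strictMono.monotone hk
      have hd : (chain j - chain i) ∣ Nat.factorial (chain k) := by
        apply Nat.dvd_factorial
        · have := chain_strictMono hij; omega
        · have := chain_strictMono.monotone (le_of_lt hij); omega
      have : chain (k + 1) - chain j = (chain k - chain j) + Nat.factorial (chain k) := by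
        show chain k + Nat.factorial (chain k) - chain j = _
        omega
      rw [this]
      exact Nat.dvd_add (ih hk) hd

theorem stmt_11 (l : ℕ) (c : ℕ → Fin l) :
    ∃ a b : ℕ, 0 < a ∧ 0 < b ∧ a ∣ b ∧ c a = c b ∧ c b = c (a + b) := by
  obtain ⟨i, j, k, hij, hjk, h1, h2⟩ :=
    exists_mono_triangle l (fun m n => c (chain n - chain m))
  refine ⟨chain j - chain i, chain k - chain j, ?_, ?_, ?_, ?_, ?_⟩
  · have := chain_strictMono hij; omega
  · have := chain_strictMono hjk; omega
  · exact chain_diff_dvd k hij hjk.le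
  · exact h1
  · have hik : chain i < chain j := chain_strictMono hij
    have hjk' : chain j < chain k := chain_strictMono hjk
    have : chain j - chain i + (chain k - chain j) = chain k - chain i := by omega
    rw [this]
    exact h2.symm
end
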